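/- Let (q_n) be an increasing sequence of integers with q_{m+2} ≥ 2 q_m for all m and q_m ≥ m. Fix H > 1 and let (m_j) be defined so that q_{m_{j+1}-1} ≤ H^{q_{m_j}} and q_{m_{j+1}} ≥ H^{q_{m_j}}. If j is large and ∑_{m=m_j}^{m_{j+1}-1} log(q_{m+1})/q_m ≥ j^{-3/2}, then there exists l ∈ [m_j, m_{j+1}-1] with q_{l+1} ≥ exp(q_l / j^{1.6}). -/

import Mathlib

open Finset Real

private lemma aux_four (s : Finset ℕ) (h : 4 ≤ s.card) :
    ∃ i₁ i₂ i₃ i₄, i₁ ∈ s ∧ i₂ ∈ s ∧ i₃ ∈ s ∧ i₄ ∈ s ∧ i₁ < i₂ ∧ i₂ < i₃ ∧ i₃ < i₄ := by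
  have hne4 : s.Nonempty := Finset.card_pos.mp (by omega)
  have hmem4 : s.max' hne4 ∈ s := s.max'_mem hne4
  have hc3 : 3 ≤ (s.erase (s.max' hne4)).card := by
    have := Finset.card_erase_of_mem hmem4; omega
  set s3 := s.erase (s.max' hne4) with hs3
  have hne3 : s3.Nonempty := Finset.card_pos.mp (by omega)
  have hmem3 : s3.max' hne3 ∈ s3 := s3.max'_mem hne3
  have hc2 : 2 ≤ (s3.erase (s3.max' hne3)).card := by
    have := Finset.card_erase_of_mem hmem3; omega
  set s2 := s3.erase (s3.max' hne3) with hs2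
  have hne2 : s2.Nonempty := Finset.card_pos.mp (by omega)
  have hmem2 : s2.max' hne2 ∈ s2 := s2.max'_mem hne2
  have hc1 : 1 ≤ (s2.erase (s2.max' hne2)).card := by
    have := Finset.card_erase_of_mem hmem2; omega
  set s1 := s2.erase (s2.max' hne2) with hs1
  have hne1 : s1.Nonempty := Finset.card_pos.mp (by omega)
  have hmem1 : s1.max' hne1 ∈ s1 := s1.max'_mem hne1
  refine ⟨s1.max' hne1, s2.max' hne2, s3.max' hne3, s.max' hne4, ?_, ?_, ?_, hmem4, ?_, ?_, ?_⟩
  · exact Finset.mem_of_mem_erase (Finset.mem_of_mem_erase (Finset.mem_of_mem_erase hmem1))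
  · exact Finset.mem_of_mem_erase (Finset.mem_of_mem_erase hmem2)
  · exact Finset.mem_of_mem_erase hmem3
  · exact lt_of_le_of_ne (s2.le_max' _ (Finset.mem_of_mem_erase hmem1))
      (Finset.ne_of_mem_erase hmem1)
  · exact lt_of_le_of_ne (s3.le_max' _ (Finset.mem_of_mem_erase hmem2))
      (Finset.ne_of_mem_erase hmem2)
  · exact lt_of_le_of_ne (s.le_max' _ (Finset.mem_of_mem_erase hmem3))
      (Finset.ne_of_mem_erase hmem3)

private lemma aux_grow (q : ℕ → ℕ) (hmono : ∀ n, q n ≤ q (n+1))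
    (hdouble : ∀ n, 2 * q n ≤ q (n+2)) (a : ℕ) : ∀ k, 2 ^ (k / 2) * q a ≤ q (a + k) := by
  intro k
  induction k using Nat.strong_induction_on with
  | _ k ih =>
    match k with
    | 0 => simpa using le_refl (q a)
    | 1 => simpa using hmono a
    | (k+2) =>
      have h1 := ih k (by omega)
      have h2 := hdouble (a + k)
      have he : (k+2)/2 = k/2 + 1 := by omega
      have : a + (k + 2) = (a + k) + 2 := by omega
      rw [he, this, pow_succ]
      calc 2 ^ (k/2) * 2 * q a = 2 * (2 ^ (k/2) * q a) := by ring
        _ ≤ 2 * q (a + k) := by omega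
        _ ≤ q ((a + k) + 2) := h2

private lemma aux_sumgeo {r : ℝ} (h0 : 0 ≤ r) (h1 : r < 1) (n : ℕ) :
    ∑ k ∈ Finset.range n, r ^ (k / 2) ≤ 2 / (1 - r) := by
  have key : ∀ M, ∑ k ∈ Finset.range (2*M), r ^ (k/2) = 2 * ∑ i ∈ Finset.range M, r ^ i := by
    intro M
    induction M with
    | zero => simp
    | succ M ih =>
      have h2 : 2 * (M+1) = (2*M) + 1 + 1 := by omega
      rw [h2, Finset.sum_range_succ, Finset.sum_range_succ, ih, Finset.sum_range_succ]
      have e1 : (2*M)/2 = M := by omega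
      have e2 : (2*M+1)/2 = M := by omega
      rw [e1, e2]; ring
  calc ∑ k ∈ Finset.range n, r^(k/2)
      ≤ ∑ k ∈ Finset.range (2*n), r^(k/2) :=
        Finset.sum_le_sum_of_subset_of_nonneg (Finset.range_subset_range.mpr (by omega))
          (fun i _ _ => pow_nonneg h0 _)
    _ = 2 * ∑ i ∈ Finset.range n, r ^ i := key n
    _ ≤ 2 * (1 - r)⁻¹ := by
        have := sum_le_hasSum (Finset.range n) (fun i _ => pow_nonneg h0 i)
          (hasSum_geometric_of_lt_one h0 h1)
        linarith
    _ = 2 / (1-r) := by rw [div_eq_mul_inv]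

private lemma aux_sqrt_pow {x : ℝ} (hx : 0 ≤ x) (n : ℕ) :
    Real.sqrt (x ^ n) = (Real.sqrt x) ^ n := by
  induction n with
  | zero => simp
  | succ n ih => rw [pow_succ, pow_succ, Real.sqrt_mul (pow_nonneg hx n), ih]

private lemma aux_exp_sq {u : ℝ} (hu : 0 ≤ u) : u^2/4 ≤ Real.exp u := by
  have h1 : u/2 ≤ Real.exp (u/2) := by have := Real.add_one_le_exp (u/2); linarith
  have h2 : (u/2)^2 ≤ (Real.exp (u/2))^2 := pow_le_pow_left₀ (by linarith) h1 2
  have h3 : Real.exp (u/2) ^ 2 = Real.exp u := by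
    rw [sq, ← Real.exp_add]; ring_nf
  nlinarith

set_option maxHeartbeats 2000000 in
theorem stmt_6 (q : ℕ → ℕ) (hmono : ∀ n, q n ≤ q (n+1)) (hdouble : ∀ n, 2 * q n ≤ q (n+2))
    (hqm : ∀ n, n ≤ q n) (H : ℝ) (hH : 1 < H)
    (m : ℕ → ℕ) (hm : ∀ j, m j < m (j+1))
    (hblock : ∀ j, (q (m (j+1) - 1) : ℝ) ≤ H ^ (q (m j)) ∧ H ^ (q (m j)) ≤ (q (m (j+1)) : ℝ)) :
    ∃ J : ℕ, ∀ j ≥ J,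
      (1 / (j : ℝ) ^ ((3:ℝ)/2) ≤
          ∑ i ∈ Finset.Ico (m j) (m (j+1)), Real.log (q (i+1)) / (q i : ℝ)) →
      ∃ l, m j ≤ l ∧ l ≤ m (j+1) - 1 ∧
        Real.exp ((q l : ℝ) / (j : ℝ) ^ ((1.6 : ℝ))) ≤ (q (l+1) : ℝ) := by
  have hQmono : Monotone q := monotone_nat_of_le_succ hmono
  have hmsm : StrictMono m := strictMono_nat_of_lt_succ hm
  have hH0 : (0:ℝ) < H := lt_trans one_pos hH
  -- sqrt 2 facts
  have hsqrt2 : (1.4:ℝ) ≤ Real.sqrt 2 := by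
    rw [show (1.4:ℝ) = Real.sqrt (1.96) by
      rw [show (1.96:ℝ) = 1.4^2 by norm_num, Real.sqrt_sq (by norm_num)]]
    exact Real.sqrt_le_sqrt (by norm_num)
  have hr0 : (0:ℝ) ≤ (Real.sqrt 2)⁻¹ := by positivity
  have hr1 : (Real.sqrt 2)⁻¹ < 1 := by
    rw [inv_lt_one_iff₀]; right; linarith
  have h7 : 2 / (1 - (Real.sqrt 2)⁻¹) ≤ 7 := by
    have hinv : (Real.sqrt 2)⁻¹ ≤ 5/7 := by
      rw [inv_le_comm₀ (by linarith) (by norm_num)]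
      linarith
    rw [div_le_iff₀ (by linarith)]
    nlinarith
  -- sqrt H facts
  have hsH : 1 < Real.sqrt H := by
    have := Real.sqrt_lt_sqrt (zero_le_one) hH
    simpa using this
  have hsH0 : (0:ℝ) < Real.sqrt H := by linarith
  have hr'0 : (0:ℝ) ≤ (Real.sqrt H)⁻¹ := by positivity
  have hr'1 : (Real.sqrt H)⁻¹ < 1 := by
    rw [inv_lt_one_iff₀]; right; exact hsH
  -- eventual bound from the geometric decay
  obtain ⟨J₂, hJ₂⟩ := Filter.eventually_atTop.mp
    ((tendsto_pow_const_mul_const_pow_of_lt_one 2 hr'0 hr'1).eventually_lt_const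
      (show (0:ℝ) < (Real.sqrt H)⁻¹/15 by positivity))
  refine ⟨max (max J₂ 60466176) (⌈(4096:ℝ) * Real.log H⌉₊ + 1), fun j hj hsum => ?_⟩
  have hjJ2 : J₂ ≤ j := le_trans (le_trans (le_max_left _ _) (le_max_left _ _)) hj
  have hj6 : 60466176 ≤ j := le_trans (le_trans (le_max_right _ _) (le_max_left _ _)) hj
  have hjceil : ⌈(4096:ℝ) * Real.log H⌉₊ + 1 ≤ j := le_trans (le_max_right _ _) hj
  have hj1 : 1 ≤ j := by omega
  have hjr : (1:ℝ) ≤ (j:ℝ) := by exact_mod_cast hj1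
  have hjpos : (0:ℝ) < (j:ℝ) := by linarith
  -- basic quantities
  set a := m j with ha
  set b := m (j+1) with hb
  have hab : a < b := hm j
  have hja : j ≤ a := hmsm.le_apply
  have hqa_ge_j : j ≤ q a := le_trans hja (hqm a)
  have hx_ge_j : (j:ℝ) ≤ (q a : ℝ) := by exact_mod_cast hqa_ge_j
  have hx_pos : (0:ℝ) < (q a : ℝ) := by linarith
  have hx_nonneg : (0:ℝ) ≤ (q a : ℝ) := le_of_lt hx_pos
  have hq1 : ∀ i, a ≤ i → 1 ≤ q i := fun i hi => le_trans (le_trans hj1 hqa_ge_j) (hQmono hi)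
  -- q a ≥ H^(j-1)
  have hxH : H ^ (j-1) ≤ (q a : ℝ) := by
    have h1 := (hblock (j-1)).2
    have he : j - 1 + 1 = j := by omega
    rw [he] at h1
    refine le_trans ?_ h1
    exact pow_le_pow_right₀ (le_of_lt hH) (le_trans (hmsm.le_apply) (hqm _))
  have hsx : (Real.sqrt H)^(j-1) ≤ Real.sqrt (q a) := by
    have := Real.sqrt_le_sqrt hxH
    rwa [aux_sqrt_pow (le_of_lt hH0)] at this
  have hsx_pos : (0:ℝ) < Real.sqrt (q a) := Real.sqrt_pos.mpr hx_pos
  -- 14 j^2 < (√H)^(j-1)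
  have hc14 : 14 * (j:ℝ)^2 < (Real.sqrt H)^(j-1) := by
    have h := hJ₂ j hjJ2
    have hY : (0:ℝ) < (Real.sqrt H)^(j-1) := pow_pos hsH0 _
    have hpow : ((Real.sqrt H)⁻¹)^j = ((Real.sqrt H)^(j-1))⁻¹ * (Real.sqrt H)⁻¹ := by
      rw [← inv_pow, ← pow_succ, Nat.sub_add_cancel hj1]
    rw [hpow] at h
    have h2 : (j:ℝ)^2 * ((Real.sqrt H)^(j-1))⁻¹ < 1/15 := by
      have hmul := mul_lt_mul_of_pos_right h hsH0
      have hc : ((Real.sqrt H)⁻¹) * Real.sqrt H = 1 := inv_mul_cancel₀ (ne_of_gt hsH0)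
      calc (j:ℝ)^2 * ((Real.sqrt H)^(j-1))⁻¹
          = (j:ℝ)^2 * (((Real.sqrt H)^(j-1))⁻¹ * (Real.sqrt H)⁻¹) * Real.sqrt H := by
            rw [mul_assoc ((j:ℝ)^2), mul_assoc, hc, mul_one]
        _ < (Real.sqrt H)⁻¹ / 15 * Real.sqrt H := hmul
        _ = 1/15 := by rw [div_mul_eq_mul_div, hc]
    have h3 : (j:ℝ)^2 < (1/15) * (Real.sqrt H)^(j-1) := by
      rw [← div_eq_mul_inv, div_lt_iff₀ hY] at h2
      linarith
    nlinarith [sq_nonneg (j:ℝ)]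
  -- 14 j^{3/2} < √(q a)
  have hj32_pos : (0:ℝ) < (j:ℝ)^((3:ℝ)/2) := Real.rpow_pos_of_pos hjpos _
  have h14 : 14 * (j:ℝ)^((3:ℝ)/2) < Real.sqrt (q a) := by
    have h1 : (j:ℝ)^((3:ℝ)/2) ≤ (j:ℝ)^((2:ℕ):ℝ) :=
      Real.rpow_le_rpow_of_exponent_le hjr (by norm_num)
    rw [Real.rpow_natCast] at h1
    calc 14 * (j:ℝ)^((3:ℝ)/2) ≤ 14 * (j:ℝ)^2 := by linarith
      _ < (Real.sqrt H)^(j-1) := hc14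
      _ ≤ Real.sqrt (q a) := hsx
  have hsmall : 7 / Real.sqrt (q a) < 1 / (2 * (j:ℝ)^((3:ℝ)/2)) := by
    have h1 : (7:ℝ) / Real.sqrt (q a) < 7 / (14 * (j:ℝ)^((3:ℝ)/2)) :=
      div_lt_div_of_pos_left (by norm_num) (by positivity) h14
    calc (7:ℝ) / Real.sqrt (q a) < 7 / (14 * (j:ℝ)^((3:ℝ)/2)) := h1
      _ = 1 / (2 * (j:ℝ)^((3:ℝ)/2)) := by ring
  -- 3/j^{1.6} ≤ 1/(2 j^{3/2})
  have hj16_pos : (0:ℝ) < (j:ℝ)^((1.6:ℝ)) := Real.rpow_pos_of_pos hjpos _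
  have hbig : 3 / (j:ℝ)^((1.6:ℝ)) ≤ 1 / (2 * (j:ℝ)^((3:ℝ)/2)) := by
    have hsplitexp : (j:ℝ)^((1.6:ℝ)) = (j:ℝ)^((3:ℝ)/2) * (j:ℝ)^((1:ℝ)/10) := by
      rw [← Real.rpow_add hjpos]; norm_num
    have h6 : (6:ℝ) ≤ (j:ℝ)^((1:ℝ)/10) := by
      have hle : ((6:ℝ)^(10:ℕ)) ≤ (j:ℝ) := by
        have : ((60466176:ℕ):ℝ) ≤ (j:ℝ) := by exact_mod_cast hj6
        norm_num at this ⊢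
        linarith
      have := Real.rpow_le_rpow (by positivity) hle (show (0:ℝ) ≤ (1:ℝ)/10 by norm_num)
      have he : ((6:ℝ)^(10:ℕ)) ^ ((1:ℝ)/10) = 6 := by
        rw [← Real.rpow_natCast (6:ℝ) 10, ← Real.rpow_mul (by norm_num)]
        norm_num
      rwa [he] at this
    have h110 : (0:ℝ) < (j:ℝ)^((1:ℝ)/10) := Real.rpow_pos_of_pos hjpos _
    rw [hsplitexp]
    rw [div_le_div_iff₀ (by positivity) (by positivity)]
    nlinarith [hj32_pos]
  -- q a > 4096 log H
  have hxgtlog : 4096 * Real.log H < (q a : ℝ) := by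
    have h1 : (4096:ℝ) * Real.log H ≤ (⌈(4096:ℝ) * Real.log H⌉₊ : ℝ) := Nat.le_ceil _
    have h2 : ((⌈(4096:ℝ) * Real.log H⌉₊ : ℕ) : ℝ) < (j:ℝ) := by
      exact_mod_cast Nat.lt_of_lt_of_le (Nat.lt_succ_self _) hjceil
    linarith
  -- contradiction setup
  by_contra hcon
  push_neg at hcon
  have hterm_lt : ∀ i ∈ Finset.Ico a b, Real.log (q (i+1)) < (q i : ℝ) / (j:ℝ)^((1.6:ℝ)) := by
    intro i hi
    obtain ⟨hia, hib⟩ := Finset.mem_Ico.mp hi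
    have h := hcon i hia (by omega)
    have hpos : (0:ℝ) < (q (i+1) : ℝ) := by
      have : 1 ≤ q (i+1) := hq1 _ (by omega)
      exact_mod_cast this
    exact (Real.log_lt_iff_lt_exp hpos).mpr h
  have hqipos : ∀ i ∈ Finset.Ico a b, (0:ℝ) < (q i : ℝ) := by
    intro i hi
    obtain ⟨hia, _⟩ := Finset.mem_Ico.mp hi
    have : 1 ≤ q i := hq1 _ hia
    exact_mod_cast this
  set B := (Finset.Ico a b).filter
    (fun i => Real.sqrt (q i) ≤ Real.log (q (i+1))) with hBdef
  -- card of B is at most 3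
  have hcard : B.card ≤ 3 := by
    by_contra hc
    push_neg at hc
    obtain ⟨i₁, i₂, i₃, i₄, h1, h2, h3, h4, h12, h23, h34⟩ := aux_four B (by omega)
    have hmemfacts : ∀ i ∈ B, i ∈ Finset.Ico a b ∧
        Real.exp (Real.sqrt (q i)) ≤ (q (i+1) : ℝ) := by
      intro i hi
      obtain ⟨hico, hlog⟩ := Finset.mem_filter.mp hi
      obtain ⟨hia, _⟩ := Finset.mem_Ico.mp hico
      have h1q : (1:ℝ) ≤ (q (i+1) : ℝ) := by exact_mod_cast hq1 (i+1) (by omega)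
      refine ⟨hico, ?_⟩
      calc Real.exp (Real.sqrt (q i)) ≤ Real.exp (Real.log (q (i+1))) :=
            Real.exp_le_exp.mpr hlog
        _ = (q (i+1) : ℝ) := Real.exp_log (by linarith)
    obtain ⟨hic1, hE1⟩ := hmemfacts i₁ h1
    obtain ⟨hic2, hE2⟩ := hmemfacts i₂ h2
    obtain ⟨hic3, hE3⟩ := hmemfacts i₃ h3
    obtain ⟨hic4, _⟩ := hmemfacts i₄ h4
    obtain ⟨hi1a, hi1b⟩ := Finset.mem_Ico.mp hic1
    obtain ⟨hi2a, hi2b⟩ := Finset.mem_Ico.mp hic2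
    obtain ⟨hi3a, hi3b⟩ := Finset.mem_Ico.mp hic3
    obtain ⟨hi4a, hi4b⟩ := Finset.mem_Ico.mp hic4
    -- s1 : exp(√x) ≤ q i₂
    have s1 : Real.exp (Real.sqrt (q a)) ≤ (q i₂ : ℝ) := by
      have hmono1 : Real.sqrt (q a) ≤ Real.sqrt (q i₁) :=
        Real.sqrt_le_sqrt (by exact_mod_cast hQmono hi1a)
      have hmono2 : (q (i₁+1) : ℝ) ≤ (q i₂ : ℝ) := by exact_mod_cast hQmono (by omega : i₁+1 ≤ i₂)
      calc Real.exp (Real.sqrt (q a)) ≤ Real.exp (Real.sqrt (q i₁)) := Real.exp_le_exp.mpr hmono1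
        _ ≤ (q (i₁+1) : ℝ) := hE1
        _ ≤ (q i₂ : ℝ) := hmono2
    -- s2 : exp(exp(√x/2)) ≤ q i₃
    have s2 : Real.exp (Real.exp (Real.sqrt (q a) / 2)) ≤ (q i₃ : ℝ) := by
      have hm1 : Real.exp (Real.sqrt (q a) / 2) ≤ Real.sqrt (q i₂) := by
        rw [Real.exp_half]
        exact Real.sqrt_le_sqrt s1
      have hmono2 : (q (i₂+1) : ℝ) ≤ (q i₃ : ℝ) := by exact_mod_cast hQmono (by omega : i₂+1 ≤ i₃)
      calc Real.exp (Real.exp (Real.sqrt (q a) / 2)) ≤ Real.exp (Real.sqrt (q i₂)) :=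
            Real.exp_le_exp.mpr hm1
        _ ≤ (q (i₂+1) : ℝ) := hE2
        _ ≤ (q i₃ : ℝ) := hmono2
    -- s3 : √(q i₃) ≤ x log H
    have s3 : Real.sqrt (q i₃) ≤ (q a : ℝ) * Real.log H := by
      have hmono2 : (q (i₃+1) : ℝ) ≤ (q (b-1) : ℝ) := by
        exact_mod_cast hQmono (by omega : i₃+1 ≤ b-1)
      have hHb : (q (b-1) : ℝ) ≤ H ^ (q a) := (hblock j).1
      have hle : Real.exp (Real.sqrt (q i₃)) ≤ H ^ (q a) := le_trans hE3 (le_trans hmono2 hHb)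
      have hHpow_pos : (0:ℝ) < H ^ (q a) := pow_pos hH0 _
      have := (Real.le_log_iff_exp_le hHpow_pos).mpr hle
      rwa [Real.log_pow] at this
    -- s4 : exp(exp(√x/2)/2) ≤ √(q i₃)
    have s4 : Real.exp (Real.exp (Real.sqrt (q a) / 2) / 2) ≤ Real.sqrt (q i₃) := by
      rw [Real.exp_half]
      exact Real.sqrt_le_sqrt s2
    -- lower bounds
    have t1 : (q a : ℝ) / 16 ≤ Real.exp (Real.sqrt (q a) / 2) := by
      have := aux_exp_sq (show (0:ℝ) ≤ Real.sqrt (q a) / 2 by positivity)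
      have hsq : (Real.sqrt (q a) / 2)^2 = (q a : ℝ) / 4 := by
        rw [div_pow, Real.sq_sqrt hx_nonneg]; norm_num
      rw [hsq] at this
      linarith
    have t2 : ((q a : ℝ))^2 / 4096 ≤ Real.exp (Real.exp (Real.sqrt (q a) / 2) / 2) := by
      have h1 : (q a : ℝ) / 32 ≤ Real.exp (Real.sqrt (q a) / 2) / 2 := by linarith
      have h2 := aux_exp_sq (show (0:ℝ) ≤ (q a : ℝ) / 32 by positivity)
      have h3 : Real.exp ((q a : ℝ)/32) ≤ Real.exp (Real.exp (Real.sqrt (q a) / 2) / 2) :=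
        Real.exp_le_exp.mpr h1
      have h4 : ((q a : ℝ)/32)^2/4 = ((q a:ℝ))^2/4096 := by ring
      linarith
    have hfinal : ((q a : ℝ))^2 / 4096 ≤ (q a : ℝ) * Real.log H := by
      calc ((q a : ℝ))^2 / 4096 ≤ Real.exp (Real.exp (Real.sqrt (q a) / 2) / 2) := t2
        _ ≤ Real.sqrt (q i₃) := s4
        _ ≤ (q a : ℝ) * Real.log H := s3
    have hmul := mul_lt_mul_of_pos_left hxgtlog hx_pos
    linarith [hfinal, hmul]
  -- bound the sum over B
  have hB_bound : ∑ i ∈ B, Real.log (q (i+1)) / (q i : ℝ) ≤ 3 / (j:ℝ)^((1.6:ℝ)) := by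
    have hstep : ∀ i ∈ B, Real.log (q (i+1)) / (q i : ℝ) ≤ 1 / (j:ℝ)^((1.6:ℝ)) := by
      intro i hi
      have hico : i ∈ Finset.Ico a b := Finset.mem_filter.mp hi |>.1
      have hqi : (0:ℝ) < (q i : ℝ) := hqipos i hico
      have hlt := le_of_lt (hterm_lt i hico)
      calc Real.log (q (i+1)) / (q i : ℝ) ≤ ((q i : ℝ) / (j:ℝ)^((1.6:ℝ))) / (q i : ℝ) := by
            gcongr
        _ = 1 / (j:ℝ)^((1.6:ℝ)) := by
            rw [div_div, mul_comm, ← div_div, div_self (ne_of_gt hqi)]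
    calc ∑ i ∈ B, Real.log (q (i+1)) / (q i : ℝ)
        ≤ B.card • (1 / (j:ℝ)^((1.6:ℝ))) := Finset.sum_le_card_nsmul _ _ _ hstep
      _ = (B.card : ℝ) * (1 / (j:ℝ)^((1.6:ℝ))) := nsmul_eq_mul _ _
      _ ≤ 3 * (1 / (j:ℝ)^((1.6:ℝ))) := by
          have : (B.card : ℝ) ≤ 3 := by exact_mod_cast hcard
          have hp : (0:ℝ) ≤ 1 / (j:ℝ)^((1.6:ℝ)) := by positivity
          nlinarith
      _ = 3 / (j:ℝ)^((1.6:ℝ)) := by ring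
  -- bound the sum outside B
  have hNB_bound : ∑ i ∈ (Finset.Ico a b).filter
      (fun i => ¬ Real.sqrt (q i) ≤ Real.log (q (i+1))), Real.log (q (i+1)) / (q i : ℝ)
      ≤ 7 / Real.sqrt (q a) := by
    have hstep : ∀ i ∈ (Finset.Ico a b).filter
        (fun i => ¬ Real.sqrt (q i) ≤ Real.log (q (i+1))),
        Real.log (q (i+1)) / (q i : ℝ) ≤ 1 / Real.sqrt (q i) := by
      intro i hi
      obtain ⟨hico, hnot⟩ := Finset.mem_filter.mp hi
      push_neg at hnot
      have hqi : (0:ℝ) < (q i : ℝ) := hqipos i hico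
      have hsqi : (0:ℝ) < Real.sqrt (q i) := Real.sqrt_pos.mpr hqi
      have heq : Real.sqrt (q i) / (q i : ℝ) = 1 / Real.sqrt (q i) := by
        rw [eq_div_iff (ne_of_gt hsqi), div_mul_eq_mul_div,
          Real.mul_self_sqrt (le_of_lt hqi), div_self (ne_of_gt hqi)]
      calc Real.log (q (i+1)) / (q i : ℝ) ≤ Real.sqrt (q i) / (q i : ℝ) := by
            gcongr
        _ = 1 / Real.sqrt (q i) := heq
    have hsub : ∑ i ∈ (Finset.Ico a b).filter
        (fun i => ¬ Real.sqrt (q i) ≤ Real.log (q (i+1))), Real.log (q (i+1)) / (q i : ℝ)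
        ≤ ∑ i ∈ Finset.Ico a b, 1 / Real.sqrt (q i) := by
      calc ∑ i ∈ (Finset.Ico a b).filter
            (fun i => ¬ Real.sqrt (q i) ≤ Real.log (q (i+1))), Real.log (q (i+1)) / (q i : ℝ)
          ≤ ∑ i ∈ (Finset.Ico a b).filter
            (fun i => ¬ Real.sqrt (q i) ≤ Real.log (q (i+1))), 1 / Real.sqrt (q i) :=
            Finset.sum_le_sum hstep
        _ ≤ ∑ i ∈ Finset.Ico a b, 1 / Real.sqrt (q i) := by
            apply Finset.sum_le_sum_of_subset_of_nonneg (Finset.filter_subset _ _)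
            intro i hi _
            positivity
    refine le_trans hsub ?_
    rw [Finset.sum_Ico_eq_sum_range]
    have hstep2 : ∀ k ∈ Finset.range (b - a),
        1 / Real.sqrt (q (a + k)) ≤ ((Real.sqrt 2)⁻¹)^(k/2) * (1 / Real.sqrt (q a)) := by
      intro k _
      have hgrw : (2:ℝ) ^ (k/2) * (q a : ℝ) ≤ (q (a + k) : ℝ) := by
        exact_mod_cast aux_grow q hmono hdouble a k
      have hs : (Real.sqrt 2)^(k/2) * Real.sqrt (q a) ≤ Real.sqrt (q (a+k)) := by
        have := Real.sqrt_le_sqrt hgrw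
        rwa [Real.sqrt_mul (by positivity), aux_sqrt_pow (by norm_num : (0:ℝ) ≤ 2)] at this
      have hpos : (0:ℝ) < (Real.sqrt 2)^(k/2) * Real.sqrt (q a) := by positivity
      calc 1 / Real.sqrt (q (a+k)) ≤ 1 / ((Real.sqrt 2)^(k/2) * Real.sqrt (q a)) :=
            one_div_le_one_div_of_le hpos hs
        _ = ((Real.sqrt 2)⁻¹)^(k/2) * (1 / Real.sqrt (q a)) := by
            rw [inv_pow, one_div, one_div, mul_inv]
    calc ∑ k ∈ Finset.range (b - a), 1 / Real.sqrt (q (a + k))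
        ≤ ∑ k ∈ Finset.range (b - a), ((Real.sqrt 2)⁻¹)^(k/2) * (1 / Real.sqrt (q a)) :=
          Finset.sum_le_sum hstep2
      _ = (∑ k ∈ Finset.range (b - a), ((Real.sqrt 2)⁻¹)^(k/2)) * (1 / Real.sqrt (q a)) :=
          (Finset.sum_mul _ _ _).symm
      _ ≤ (2 / (1 - (Real.sqrt 2)⁻¹)) * (1 / Real.sqrt (q a)) := by
          apply mul_le_mul_of_nonneg_right (aux_sumgeo hr0 hr1 _) (by positivity)
      _ ≤ 7 * (1 / Real.sqrt (q a)) := mul_le_mul_of_nonneg_right h7 (by positivity)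
      _ = 7 / Real.sqrt (q a) := by ring
  -- combine
  have hsplit : ∑ i ∈ Finset.Ico a b, Real.log (q (i+1)) / (q i : ℝ)
      = ∑ i ∈ B, Real.log (q (i+1)) / (q i : ℝ)
      + ∑ i ∈ (Finset.Ico a b).filter
          (fun i => ¬ Real.sqrt (q i) ≤ Real.log (q (i+1))), Real.log (q (i+1)) / (q i : ℝ) :=
    (Finset.sum_filter_add_sum_filter_not _ _ _).symm
  have htotal : ∑ i ∈ Finset.Ico a b, Real.log (q (i+1)) / (q i : ℝ)
      ≤ 3 / (j:ℝ)^((1.6:ℝ)) + 7 / Real.sqrt (q a) := by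
    rw [hsplit]; exact add_le_add hB_bound hNB_bound
  have heq : 1 / (2 * (j:ℝ)^((3:ℝ)/2)) + 1 / (2 * (j:ℝ)^((3:ℝ)/2)) = 1 / (j:ℝ)^((3:ℝ)/2) := by
    rw [← add_div, show (1:ℝ)+1 = 2 by norm_num, ← div_div]
    norm_num
  linarith [hsum, htotal, hbig, hsmall]
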